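/- arXiv:1107.4854 — 4 statements merged into one kernel-verified Lean document; each statement's English description precedes it below -/
import Mathlib

section
/- Let c_0, c_1, … ∈ ℂ with partial sums S_n(t) = Σ_{j=0}^n c_j t^j, let τ_1, …, τ_k be distinct nonzero complex numbers, and let f_1, …, f_k ∈ ℂ. For t ∈ ℂ define the (k+1)×(k+1) matrices A(t), whose first row is (S_k(t), t S_{k−1}(t), …, t^k S_0(t)) and whose (i+1)-th row, for i = 1, …, k, is (τ_i^{−k}(S_k(τ_i) − f_i), τ_i^{−k+1}(S_{k−1}(τ_i) − f_i), …, S_0(τ_i) − f_i), and B(t), identical to A(t) except that its first row is (1, t, …, t^k). Then for every m ∈ {1, …, k}, det A(τ_m) = f_m · det B(τ_m); in particular, whenever det B(τ_m) ≠ 0, the rational function R_k(t) = det A(t)/det B(t) satisfies the interpolation conditions R_k(τ_m) = f_m. -/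
open Finset

/-- Determinantal expression for the Padé-type rational interpolant:
with `A(t)` having first row `(S_k(t), t S_{k-1}(t), …, t^k S_0(t))` and `B(t)` having
first row `(1, t, …, t^k)`, both with the remaining rows
`(τ_i^{-k}(S_k(τ_i) - f_i), …, S_0(τ_i) - f_i)`, one has `det A(τ_m) = f_m · det B(τ_m)`
for every node `τ_m`; in particular `R_k(τ_m) = det A(τ_m)/det B(τ_m) = f_m` whenever
`det B(τ_m) ≠ 0`. -/
theorem pade_type_interpolant_determinantal
    (k : ℕ) (c : ℕ → ℂ)
    (S : ℕ → ℂ → ℂ) (hS : ∀ n t, S n t = ∑ j ∈ range (n + 1), c j * t ^ j)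
    (τ : Fin k → ℂ) (hτ0 : ∀ i, τ i ≠ 0) (hτ : Function.Injective τ)
    (f : Fin k → ℂ)
    (A B : ℂ → Matrix (Fin (k + 1)) (Fin (k + 1)) ℂ)
    (hA0 : ∀ t (j : Fin (k + 1)), A t 0 j = t ^ (j : ℕ) * S (k - (j : ℕ)) t)
    (hA : ∀ t (i : Fin k) (j : Fin (k + 1)),
      A t i.succ j = τ i ^ (((j : ℕ) : ℤ) - (k : ℤ)) * (S (k - (j : ℕ)) (τ i) - f i))
    (hB0 : ∀ t (j : Fin (k + 1)), B t 0 j = t ^ (j : ℕ))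
    (hB : ∀ t (i : Fin k) (j : Fin (k + 1)),
      B t i.succ j = τ i ^ (((j : ℕ) : ℤ) - (k : ℤ)) * (S (k - (j : ℕ)) (τ i) - f i)) :
    ∀ m : Fin k, (A (τ m)).det = f m * (B (τ m)).det ∧
      ((B (τ m)).det ≠ 0 → (A (τ m)).det / (B (τ m)).det = f m) := by
  intro m
  have key : (A (τ m)).det = f m * (B (τ m)).det := by
    have hAeq : A (τ m) = (B (τ m)).updateRow 0
        (τ m ^ k • (A (τ m) m.succ) + f m • (B (τ m) 0)) := by
      ext i j
      rcases Fin.eq_zero_or_eq_succ i with h | ⟨i', rfl⟩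
      · subst h
        rw [Matrix.updateRow_self]
        simp only [Pi.add_apply, Pi.smul_apply, smul_eq_mul, hA0, hA, hB0]
        have h1 : (τ m) ^ (k : ℕ) * (τ m) ^ (((j : ℕ) : ℤ) - (k : ℤ)) = (τ m) ^ ((j : ℕ)) := by
          rw [← zpow_natCast (τ m) k, ← zpow_add₀ (hτ0 m), ← zpow_natCast (τ m) (j : ℕ)]
          ring_nf
        calc τ m ^ (j : ℕ) * S (k - (j : ℕ)) (τ m)
            = (τ m ^ (k : ℕ) * τ m ^ (((j : ℕ) : ℤ) - (k : ℤ))) * (S (k - (j : ℕ)) (τ m) - f m)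
              + f m * τ m ^ (j : ℕ) := by rw [h1]; ring
          _ = _ := by ring
      · rw [Matrix.updateRow_ne (Fin.succ_ne_zero i'), hA, hB]
    rw [hAeq, Matrix.det_updateRow_add, Matrix.det_updateRow_smul,
      Matrix.det_updateRow_smul, Matrix.updateRow_eq_self]
    have hz : ((B (τ m)).updateRow 0 (A (τ m) m.succ)).det = 0 := by
      apply Matrix.det_zero_of_row_eq (i := 0) (j := m.succ) (Fin.succ_ne_zero m).symm
      ext j
      rw [Matrix.updateRow_self, Matrix.updateRow_ne (Fin.succ_ne_zero m), hA, hB]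
    rw [hz]
    simp [smul_eq_mul]
  refine ⟨key, fun hB0' => ?_⟩
  rw [key, mul_div_assoc, div_self hB0', mul_one]
end

section
/- Let τ_0, …, τ_k be distinct nonzero complex numbers, f_0, …, f_k ∈ ℂ, w_0, …, w_k ∈ ℂ, and let f(t) = Σ_{i≥0} c_i t^i be a formal power series over ℂ. Set L_i(t) = Π_{j≠i}(t − τ_j), N(t) = Σ_{i=0}^k w_i f_i L_i(t), D(t) = Σ_{i=0}^k w_i L_i(t). Then the following are equivalent: (a) for every j = 0, …, k−1, Σ_{i=0}^k (f_i/τ_i^{j} − c_0/τ_i^{j} − c_1/τ_i^{j−1} − ⋯ − c_j) · (w_i/τ_i) = 0; (b) the formal power series N − f · D has vanishing coefficients in every degree from 0 through k−1. In particular, if moreover the w_i are nonzero, so that D(0) ≠ 0 can be tested, condition (a) implies that the barycentric rational interpolant R_k = N/D satisfies f(t) − R_k(t) = O(t^k), i.e., the coefficients of f − N · D⁻¹ vanish in degrees 0 through k−1 whenever D(0) ≠ 0. -/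
open Finset

namespace PadeAux

noncomputable def u (τ : ℂ) : PowerSeries ℂ := PowerSeries.mk fun m => -(τ⁻¹ ^ (m + 1))

lemma X_sub_mul_u (τ : ℂ) (hτ : τ ≠ 0) :
    ((Polynomial.X - Polynomial.C τ : Polynomial ℂ) : PowerSeries ℂ) * u τ = 1 := by
  push_cast
  ext n
  rcases n with _ | n
  · simp [u, PowerSeries.coeff_zero_eq_constantCoeff, hτ]
  · rw [sub_mul, map_sub, PowerSeries.coeff_succ_X_mul]
    simp only [u, PowerSeries.coeff_mk, PowerSeries.coeff_C_mul, PowerSeries.coeff_one,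
      Nat.succ_ne_zero, if_false]
    field_simp
    rw [pow_succ _ (n + 1), mul_comm ((1 / τ) ^ (n + 1)), ← mul_assoc, mul_one_div_cancel hτ,
      one_mul, sub_self]

lemma coeff_g (τ a : ℂ) (hτ : τ ≠ 0) (F : PowerSeries ℂ) (c : ℕ → ℂ)
    (hc : ∀ i, c i = PowerSeries.coeff i F) (j : ℕ) :
    PowerSeries.coeff j ((PowerSeries.C a - F) * u τ) =
      -((a / τ ^ j - ∑ s ∈ range (j + 1), c s / τ ^ (j - s)) * τ⁻¹) := by
  rw [PowerSeries.coeff_mul, Finset.Nat.sum_antidiagonal_eq_sum_range_succ_mk]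
  have h1 : ∀ p ∈ range (j + 1),
      (PowerSeries.coeff p) (PowerSeries.C a - F) * (PowerSeries.coeff (j - p)) (u τ)
        = c p / τ ^ (j - p) * τ⁻¹ - (if p = 0 then a / τ ^ j * τ⁻¹ else 0) := by
    intro p _
    rw [map_sub, PowerSeries.coeff_C, ← hc p]
    simp only [u, PowerSeries.coeff_mk]
    rcases eq_or_ne p 0 with rfl | hp
    · simp only [if_pos rfl, if_true, Nat.sub_zero, div_eq_mul_inv, ← inv_pow, pow_succ]
      ring
    · simp only [if_neg hp, div_eq_mul_inv, ← inv_pow, pow_succ]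
      ring
  rw [Finset.sum_congr rfl h1, Finset.sum_sub_distrib,
    Finset.sum_ite_eq' (range (j + 1)) 0 (fun _ => a / τ ^ j * τ⁻¹),
    if_pos (by simp : (0:ℕ) ∈ range (j + 1)), sub_mul, neg_sub, Finset.sum_mul]

end PadeAux

/-- The weights of the Padé-type barycentric interpolant: the linear
system (a) on the weights `w_i` holds iff the formal power series `N - f·D` has vanishing
coefficients in degrees `0, …, k-1`; in particular, for nonzero weights and `D(0) ≠ 0`,
(a) implies that the coefficients of `f - N·D⁻¹` vanish in degrees `0, …, k-1`,
i.e. `f(t) - R_k(t) = O(t^k)`. -/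
theorem pade_type_barycentric_weight_system
    (k : ℕ) (τ : Fin (k + 1) → ℂ) (hτ : Function.Injective τ) (hτ0 : ∀ i, τ i ≠ 0)
    (fv w : Fin (k + 1) → ℂ)
    (F : PowerSeries ℂ) (c : ℕ → ℂ) (hc : ∀ i, c i = PowerSeries.coeff i F)
    (L : Fin (k + 1) → Polynomial ℂ)
    (hL : ∀ i, L i = ∏ j ∈ univ.erase i, (Polynomial.X - Polynomial.C (τ j)))
    (N D : Polynomial ℂ)
    (hN : N = ∑ i, Polynomial.C (w i * fv i) * L i)
    (hD : D = ∑ i, Polynomial.C (w i) * L i) :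
    ((∀ j < k, ∑ i, (fv i / τ i ^ j - ∑ s ∈ range (j + 1), c s / τ i ^ (j - s)) * (w i / τ i) = 0)
        ↔ ∀ n < k, PowerSeries.coeff n ((N : PowerSeries ℂ) - F * (D : PowerSeries ℂ)) = 0)
    ∧ ((∀ i, w i ≠ 0) → D.eval 0 ≠ 0 →
        (∀ j < k, ∑ i,
          (fv i / τ i ^ j - ∑ s ∈ range (j + 1), c s / τ i ^ (j - s)) * (w i / τ i) = 0) →
        ∀ n < k, PowerSeries.coeff n (F - (N : PowerSeries ℂ) * (D : PowerSeries ℂ)⁻¹) = 0) := by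
  classical
  set g : Fin (k + 1) → PowerSeries ℂ :=
    fun i => (PowerSeries.C (fv i) - F) * PadeAux.u (τ i) with hg
  set G : PowerSeries ℂ := ∑ i, PowerSeries.C (w i) * g i with hG
  set ℓp : Polynomial ℂ := ∏ j, (Polynomial.X - Polynomial.C (τ j)) with hℓp
  have hLmul : ∀ i, (Polynomial.X - Polynomial.C (τ i)) * L i = ℓp := by
    intro i
    rw [hL i, hℓp, ← Finset.mul_prod_erase univ _ (mem_univ i)]
  have h1 : ∀ i, ((Polynomial.X - Polynomial.C (τ i) : Polynomial ℂ) : PowerSeries ℂ) * g i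
      = PowerSeries.C (fv i) - F := by
    intro i
    calc ((Polynomial.X - Polynomial.C (τ i) : Polynomial ℂ) : PowerSeries ℂ)
          * ((PowerSeries.C (fv i) - F) * PadeAux.u (τ i))
        = (PowerSeries.C (fv i) - F)
          * (((Polynomial.X - Polynomial.C (τ i) : Polynomial ℂ) : PowerSeries ℂ)
            * PadeAux.u (τ i)) := by ring
      _ = PowerSeries.C (fv i) - F := by
          rw [PadeAux.X_sub_mul_u (τ i) (hτ0 i), mul_one]
  have hkey : (↑N : PowerSeries ℂ) - F * ↑D = (ℓp : PowerSeries ℂ) * G := by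
    rw [hN, hD, ← Polynomial.coeToPowerSeries.ringHom_apply,
      ← Polynomial.coeToPowerSeries.ringHom_apply, map_sum, map_sum, Finset.mul_sum, hG,
      Finset.mul_sum, ← Finset.sum_sub_distrib]
    refine Finset.sum_congr rfl fun i _ => ?_
    simp only [map_mul, Polynomial.coeToPowerSeries.ringHom_apply, Polynomial.coe_C]
    have h2 : (ℓp : PowerSeries ℂ)
        = ((Polynomial.X - Polynomial.C (τ i) : Polynomial ℂ) : PowerSeries ℂ) * ↑(L i) := by
      rw [← Polynomial.coe_mul, hLmul i]
    rw [h2]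
    linear_combination (-(PowerSeries.C (w i) * (L i : PowerSeries ℂ))) * (h1 i)
  have hcoeffG : ∀ j : ℕ, PowerSeries.coeff j G
      = -(∑ i, (fv i / τ i ^ j - ∑ s ∈ range (j + 1), c s / τ i ^ (j - s)) * (w i / τ i)) := by
    intro j
    rw [hG, map_sum]
    have hterm : ∀ i : Fin (k + 1), PowerSeries.coeff j (PowerSeries.C (w i) * g i)
        = -((fv i / τ i ^ j - ∑ s ∈ range (j + 1), c s / τ i ^ (j - s)) * (w i / τ i)) := by
      intro i
      rw [PowerSeries.coeff_C_mul, hg,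
        PadeAux.coeff_g (τ i) (fv i) (hτ0 i) F c hc j, div_eq_mul_inv (w i) (τ i)]
      ring
    rw [Finset.sum_congr rfl fun i _ => hterm i, Finset.sum_neg_distrib]
  have hiff1 : (∀ j < k, ∑ i, (fv i / τ i ^ j
        - ∑ s ∈ range (j + 1), c s / τ i ^ (j - s)) * (w i / τ i) = 0)
      ↔ (∀ j < k, PowerSeries.coeff j G = 0) := by
    refine forall₂_congr fun j hj => ?_
    rw [hcoeffG j, neg_eq_zero]
  have hℓunit : IsUnit (ℓp : PowerSeries ℂ) := by
    rw [PowerSeries.isUnit_iff_constantCoeff, Polynomial.constantCoeff_coe,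
      Polynomial.coeff_zero_eq_eval_zero, hℓp]
    simp only [Polynomial.eval_prod, Polynomial.eval_sub, Polynomial.eval_X, Polynomial.eval_C,
      zero_sub]
    rw [isUnit_iff_ne_zero]
    exact Finset.prod_ne_zero_iff.mpr fun i _ => neg_ne_zero.mpr (hτ0 i)
  have hiff2 : (∀ n < k, PowerSeries.coeff n ((N : PowerSeries ℂ) - F * (D : PowerSeries ℂ)) = 0)
      ↔ (∀ n < k, PowerSeries.coeff n G = 0) := by
    rw [← PowerSeries.X_pow_dvd_iff, ← PowerSeries.X_pow_dvd_iff, hkey]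
    exact hℓunit.dvd_mul_left
  have part1 := hiff1.trans hiff2.symm
  refine ⟨part1, fun _ hD0 ha n hn => ?_⟩
  have hdvd : (PowerSeries.X : PowerSeries ℂ) ^ k ∣ ((N : PowerSeries ℂ) - F * ↑D) :=
    PowerSeries.X_pow_dvd_iff.mpr (part1.mp ha)
  have hDc : PowerSeries.constantCoeff (↑D : PowerSeries ℂ) ≠ 0 := by
    rw [Polynomial.constantCoeff_coe, Polynomial.coeff_zero_eq_eval_zero]; exact hD0
  have hDinv : (↑D : PowerSeries ℂ) * (↑D : PowerSeries ℂ)⁻¹ = 1 :=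
    PowerSeries.mul_inv_cancel _ hDc
  have heq : F - (↑N : PowerSeries ℂ) * (↑D : PowerSeries ℂ)⁻¹
      = -(((↑N : PowerSeries ℂ) - F * ↑D) * (↑D : PowerSeries ℂ)⁻¹) := by
    have hF : F = F * ((↑D : PowerSeries ℂ) * (↑D : PowerSeries ℂ)⁻¹) := by
      rw [hDinv, mul_one]
    calc F - (↑N : PowerSeries ℂ) * (↑D : PowerSeries ℂ)⁻¹
        = F * ((↑D : PowerSeries ℂ) * (↑D : PowerSeries ℂ)⁻¹)
          - (↑N : PowerSeries ℂ) * (↑D : PowerSeries ℂ)⁻¹ := by rw [← hF]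
      _ = -(((↑N : PowerSeries ℂ) - F * ↑D) * (↑D : PowerSeries ℂ)⁻¹) := by ring
  rw [heq, map_neg, neg_eq_zero]
  exact PowerSeries.X_pow_dvd_iff.mp (hdvd.mul_right _) n hn
end

section
/- Let n, k ≥ 1, let a < b be real numbers with 0 ∈ [a, b], let τ_1, …, τ_k be distinct nonzero points of [a, b], and let t ∈ [a, b] with t ∉ {0, τ_1, …, τ_k}. Let D, N, Q be real polynomials with deg N + deg Q ≤ n + k − 1, and let G : ℝ → ℝ be n + k times differentiable on an open interval containing [a, b]. Set H(x) = G(x) D(x) − N(x) Q(x), and assume H^{(j)}(0) = 0 for j = 0, …, n − 1 and H(τ_i) = 0 for i = 1, …, k. Then there exists ξ ∈ [a, b] (depending on t) such that G(t) D(t) − N(t) Q(t) = (t^n (t − τ_1) ⋯ (t − τ_k) / (n + k)!) · (G · D)^{(n+k)}(ξ). In particular, writing G = f · Q where f is the interpolated function (so that f Q is smooth on [a, b] even if f has poles cancelled by the factor φ dividing Q), the interpolation error satisfies f(t) − N(t)/D(t) = (t^n (t − τ_1)⋯(t − τ_k) / ((n+k)! D(t) Q(t))) · d^{n+k}/dξ^{n+k}[f(ξ)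 D(ξ) Q(ξ)]|_{ξ = ξ_t} whenever D(t) Q(t) ≠ 0. -/
open Finset

/-- One Rolle step: a finset of `q+2` zeros of `W` in `[a,b]` yields a finset of `q+1`
zeros of `deriv W` in `[a,b]`, none of which lies in the original set. -/
lemma rolle_step_aux (a b : ℝ) (W : ℝ → ℝ)
    (hW : ∀ x ∈ Set.Icc a b, DifferentiableAt ℝ W x)
    (q : ℕ) (S : Finset ℝ) (hcard : S.card = q + 2)
    (hmem : ∀ x ∈ S, x ∈ Set.Icc a b) (hzero : ∀ x ∈ S, W x = 0) :
    ∃ S' : Finset ℝ, S'.card = q + 1 ∧ (∀ x ∈ S', x ∈ Set.Icc a b) ∧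
      (∀ x ∈ S', deriv W x = 0) ∧ ∀ x ∈ S', x ∉ S := by
  set e : Fin (q + 2) ≃o S := S.orderIsoOfFin hcard with he
  have hmono : ∀ {i j : Fin (q + 2)}, i < j → ((e i : ℝ) < (e j : ℝ)) := by
    intro i j hij
    exact_mod_cast Subtype.coe_lt_coe.mpr (e.strictMono hij)
  have hmemS : ∀ i : Fin (q + 2), ((e i : ℝ)) ∈ S := fun i => (e i).2
  have key : ∀ i : Fin (q + 1), ∃ y, y ∈ Set.Ioo ((e i.castSucc : ℝ)) ((e i.succ : ℝ)) ∧
      deriv W y = 0 := by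
    intro i
    have hlt : (e i.castSucc : ℝ) < (e i.succ : ℝ) := hmono Fin.castSucc_lt_succ
    have hsubIcc : Set.Icc ((e i.castSucc : ℝ)) ((e i.succ : ℝ)) ⊆ Set.Icc a b := by
      intro x hx
      have h1 := hmem _ (hmemS i.castSucc)
      have h2 := hmem _ (hmemS i.succ)
      exact ⟨le_trans h1.1 hx.1, le_trans hx.2 h2.2⟩
    have hcont : ContinuousOn W (Set.Icc ((e i.castSucc : ℝ)) ((e i.succ : ℝ))) :=
      fun x hx => ((hW x (hsubIcc hx)).continuousAt).continuousWithinAt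
    have heq : W (e i.castSucc : ℝ) = W (e i.succ : ℝ) := by
      rw [hzero _ (hmemS i.castSucc), hzero _ (hmemS i.succ)]
    obtain ⟨c, hc, hc0⟩ := exists_deriv_eq_zero hlt hcont heq
    exact ⟨c, hc, hc0⟩
  choose y hy hy0 using key
  have hymono : StrictMono y := by
    intro i j hij
    calc y i < (e i.succ : ℝ) := (hy i).2
    _ ≤ (e j.castSucc : ℝ) := by
        rcases eq_or_lt_of_le (Fin.succ_le_castSucc_iff.mpr hij) with h | h
        · rw [h]
        · exact (hmono h).le
    _ < y j := (hy j).1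
  have hynotin : ∀ i, y i ∉ S := by
    intro i hyS
    set j : Fin (q + 2) := e.symm ⟨y i, hyS⟩ with hj
    have hyj : (e j : ℝ) = y i := by rw [hj, OrderIso.apply_symm_apply]
    have h1 : i.castSucc < j := by
      have := (hy i).1
      rw [← hyj] at this
      by_contra hcon
      push_neg at hcon
      rcases eq_or_lt_of_le hcon with h | h
      · rw [h] at this; exact lt_irrefl _ this
      · exact absurd (hmono h) (by linarith)
    have h2 : j < i.succ := by
      have := (hy i).2
      rw [← hyj] at this
      by_contra hcon
      push_neg at hcon
      rcases eq_or_lt_of_le hcon with h | h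
      · rw [← h] at this; exact lt_irrefl _ this
      · exact absurd (hmono h) (by linarith)
    have := h1.trans h2
    simp only [Fin.lt_def, Fin.val_succ, Fin.coe_castSucc] at h1 h2
    omega
  refine ⟨Finset.image y Finset.univ, ?_, ?_, ?_, ?_⟩
  · rw [Finset.card_image_of_injective _ hymono.injective, Finset.card_univ, Fintype.card_fin]
  · intro x hx
    obtain ⟨i, _, rfl⟩ := Finset.mem_image.mp hx
    have hlo := (hmem _ (hmemS i.castSucc)).1
    have hhi := (hmem _ (hmemS i.succ)).2
    exact ⟨le_trans hlo (hy i).1.le, le_trans (hy i).2.le hhi⟩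
  · intro x hx
    obtain ⟨i, _, rfl⟩ := Finset.mem_image.mp hx
    exact hy0 i
  · intro x hx
    obtain ⟨i, _, rfl⟩ := Finset.mem_image.mp hx
    exact hynotin i

/-- Generalized Rolle with simple zeros: `p+1` zeros give a zero of the `p`-th derivative. -/
lemma rolleA_aux (p : ℕ) : ∀ (A B a b : ℝ) (W : ℝ → ℝ),
    Set.Icc a b ⊆ Set.Ioo A B →
    (∀ i < p, ∀ y ∈ Set.Ioo A B, DifferentiableAt ℝ (iteratedDeriv i W) y) →
    ∀ S : Finset ℝ, S.card = p + 1 → (∀ x ∈ S, x ∈ Set.Icc a b) → (∀ x ∈ S, W x = 0) →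
    ∃ ξ ∈ Set.Icc a b, iteratedDeriv p W ξ = 0 := by
  induction p with
  | zero =>
    intro A B a b W _ _ S hcard hmem hzero
    obtain ⟨x, hx⟩ := Finset.card_pos.mp (by rw [hcard]; omega)
    exact ⟨x, hmem x hx, by rw [iteratedDeriv_zero]; exact hzero x hx⟩
  | succ p ih =>
    intro A B a b W hsub hW S hcard hmem hzero
    have hW0 : ∀ x ∈ Set.Icc a b, DifferentiableAt ℝ W x := by
      intro x hx
      have := hW 0 (Nat.succ_pos p) x (hsub hx)
      rwa [iteratedDeriv_zero] at this
    obtain ⟨S', hcard', hmem', hzero', _⟩ := rolle_step_aux a b W hW0 p S hcard hmem hzero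
    have hW' : ∀ i < p, ∀ y ∈ Set.Ioo A B, DifferentiableAt ℝ (iteratedDeriv i (deriv W)) y := by
      intro i hi y hy
      rw [← iteratedDeriv_succ']
      exact hW (i + 1) (by omega) y hy
    obtain ⟨ξ, hξ, hξ0⟩ := ih A B a b (deriv W) hsub hW' S' hcard' hmem' hzero'
    refine ⟨ξ, hξ, ?_⟩
    rwa [iteratedDeriv_succ']

/-- Generalized Rolle with a zero of order `n` at `0` and `p+1` simple nonzero zeros. -/
lemma rolleB_aux (n : ℕ) : ∀ (p : ℕ) (A B a b : ℝ) (W : ℝ → ℝ),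
    Set.Icc a b ⊆ Set.Ioo A B → (0 : ℝ) ∈ Set.Icc a b →
    (∀ i < n + p, ∀ y ∈ Set.Ioo A B, DifferentiableAt ℝ (iteratedDeriv i W) y) →
    (∀ j < n, iteratedDeriv j W 0 = 0) →
    ∀ S : Finset ℝ, S.card = p + 1 → (0 : ℝ) ∉ S → (∀ x ∈ S, x ∈ Set.Icc a b) →
      (∀ x ∈ S, W x = 0) →
    ∃ ξ ∈ Set.Icc a b, iteratedDeriv (n + p) W ξ = 0 := by
  induction n with
  | zero =>
    intro p A B a b W hsub _ hW _ S hcard _ hmem hzero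
    have := rolleA_aux p A B a b W hsub (by simpa using hW) S hcard hmem hzero
    simpa using this
  | succ n ih =>
    intro p A B a b W hsub h0 hW hzero0 S hcard hS0 hmem hzero
    have hW0 : ∀ x ∈ Set.Icc a b, DifferentiableAt ℝ W x := by
      intro x hx
      have := hW 0 (by omega) x (hsub hx)
      rwa [iteratedDeriv_zero] at this
    have hScard' : (insert (0 : ℝ) S).card = p + 2 := by
      rw [Finset.card_insert_of_notMem hS0, hcard]
    have hmem' : ∀ x ∈ insert (0 : ℝ) S, x ∈ Set.Icc a b := by
      intro x hx
      rcases Finset.mem_insert.mp hx with h | h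
      · rwa [h]
      · exact hmem x h
    have hzero' : ∀ x ∈ insert (0 : ℝ) S, W x = 0 := by
      intro x hx
      rcases Finset.mem_insert.mp hx with h | h
      · rw [h]
        have := hzero0 0 (by omega)
        rwa [iteratedDeriv_zero] at this
      · exact hzero x h
    obtain ⟨S', hcard', hmem'', hzero'', hnotin⟩ :=
      rolle_step_aux a b W hW0 p (insert (0 : ℝ) S) hScard' hmem' hzero'
    have hS'0 : (0 : ℝ) ∉ S' := fun h => hnotin 0 h (Finset.mem_insert_self 0 S)
    have hW' : ∀ i < n + p, ∀ y ∈ Set.Ioo A B, DifferentiableAt ℝ (iteratedDeriv i (deriv W)) y := by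
      intro i hi y hy
      rw [← iteratedDeriv_succ']
      exact hW (i + 1) (by omega) y hy
    have hzero0' : ∀ j < n, iteratedDeriv j (deriv W) 0 = 0 := by
      intro j hj
      rw [← iteratedDeriv_succ']
      exact hzero0 (j + 1) (by omega)
    obtain ⟨ξ, hξ, hξ0⟩ := ih p A B a b (deriv W) hsub h0 hW' hzero0' S' hcard' hS'0 hmem'' hzero''
    refine ⟨ξ, hξ, ?_⟩
    have hnp : n + 1 + p = (n + p) + 1 := by ring
    rw [hnp, iteratedDeriv_succ']
    exact hξ0

lemma poly_iteratedDeriv (j : ℕ) (p : Polynomial ℝ) :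
    iteratedDeriv j (fun x => p.eval x) = fun x => (Polynomial.derivative^[j] p).eval x := by
  induction j generalizing p with
  | zero => simp [iteratedDeriv_zero]
  | succ j ih =>
    rw [iteratedDeriv_succ', Function.iterate_succ_apply]
    rw [show deriv (fun x => p.eval x) = fun x => (Polynomial.derivative p).eval x from
      funext fun x => Polynomial.deriv p]
    exact ih _

/-- Leibniz-type lemma: the `j`-th iterated derivative of `g * p.eval` on an open interval is a
combination `∑ iteratedDeriv i g * (c i).eval` for some polynomials `c i`. -/
lemma mul_poly_aux (A B : ℝ) (m : ℕ) (g : ℝ → ℝ)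
    (hg : ∀ i < m, ∀ y ∈ Set.Ioo A B, DifferentiableAt ℝ (iteratedDeriv i g) y)
    (p : Polynomial ℝ) :
    ∀ j ≤ m, ∃ c : ℕ → Polynomial ℝ, (∀ i, j < i → c i = 0) ∧
      ∀ x ∈ Set.Ioo A B, iteratedDeriv j (fun y => g y * p.eval y) x =
        ∑ i ∈ Finset.range (j + 1), iteratedDeriv i g x * (c i).eval x := by
  intro j
  induction j with
  | zero =>
    intro _
    refine ⟨fun i => if i = 0 then p else 0, fun i hi => by simp [show i ≠ 0 by omega], ?_⟩
    intro x _
    simp [iteratedDeriv_zero]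
  | succ j ih =>
    intro hjm
    obtain ⟨c, hc0, hc⟩ := ih (by omega)
    classical
    refine ⟨fun i => Polynomial.derivative (c i) + (if i = 0 then 0 else c (i - 1)), ?_, ?_⟩
    · intro i hi
      have h1 : c i = 0 := hc0 i (by omega)
      have h2 : i ≠ 0 := by omega
      have h3 : c (i - 1) = 0 := hc0 (i - 1) (by omega)
      simp [h1, h2, h3]
    intro x hx
    have hopen : IsOpen (Set.Ioo A B) := isOpen_Ioo
    have hEv : iteratedDeriv j (fun y => g y * p.eval y) =ᶠ[nhds x]
        (fun y => ∑ i ∈ Finset.range (j + 1), iteratedDeriv i g y * (c i).eval y) :=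
      Filter.eventuallyEq_of_mem (hopen.mem_nhds hx) hc
    have hD : ∀ i ∈ Finset.range (j + 1),
        HasDerivAt (fun y => iteratedDeriv i g y * (c i).eval y)
          (iteratedDeriv (i + 1) g x * (c i).eval x
            + iteratedDeriv i g x * ((c i).derivative).eval x) x := by
      intro i hi
      have hdi : DifferentiableAt ℝ (iteratedDeriv i g) x :=
        hg i (by simp at hi; omega) x hx
      have h1 : HasDerivAt (iteratedDeriv i g) (iteratedDeriv (i + 1) g x) x := by
        rw [iteratedDeriv_succ]
        exact hdi.hasDerivAt
      exact h1.mul (Polynomial.hasDerivAt (c i) x)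
    have hsum : HasDerivAt (fun y => ∑ i ∈ Finset.range (j + 1),
          iteratedDeriv i g y * (c i).eval y)
        (∑ i ∈ Finset.range (j + 1), (iteratedDeriv (i + 1) g x * (c i).eval x
            + iteratedDeriv i g x * ((c i).derivative).eval x)) x :=
      HasDerivAt.fun_sum hD
    have : iteratedDeriv (j + 1) (fun y => g y * p.eval y) x
        = ∑ i ∈ Finset.range (j + 1), (iteratedDeriv (i + 1) g x * (c i).eval x
            + iteratedDeriv i g x * ((c i).derivative).eval x) := by
      rw [iteratedDeriv_succ, hEv.deriv_eq, hsum.deriv]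
    rw [this, Finset.sum_add_distrib]
    rw [show (∑ i ∈ Finset.range (j + 2), iteratedDeriv i g x *
          ((Polynomial.derivative (c i) + if i = 0 then 0 else c (i - 1)).eval x))
        = ∑ i ∈ Finset.range (j + 2), (iteratedDeriv i g x * ((c i).derivative).eval x
            + iteratedDeriv i g x * ((if i = 0 then (0:Polynomial ℝ) else c (i - 1)).eval x))
      from Finset.sum_congr rfl fun i _ => by simp [mul_add]]
    rw [Finset.sum_add_distrib]
    have e1 : (∑ i ∈ Finset.range (j + 2), iteratedDeriv i g x * ((c i).derivative).eval x)
        = ∑ i ∈ Finset.range (j + 1), iteratedDeriv i g x * ((c i).derivative).eval x := by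
      rw [Finset.sum_range_succ (fun i => iteratedDeriv i g x * ((c i).derivative).eval x) (j+1),
        hc0 (j + 1) (by omega)]
      simp
    have e2 : (∑ i ∈ Finset.range (j + 2), iteratedDeriv i g x *
          ((if i = 0 then (0:Polynomial ℝ) else c (i - 1)).eval x))
        = ∑ i ∈ Finset.range (j + 1), iteratedDeriv (i + 1) g x * (c i).eval x := by
      rw [Finset.sum_range_succ' (fun i => iteratedDeriv i g x *
          ((if i = 0 then (0:Polynomial ℝ) else c (i - 1)).eval x)) (j+1)]
      simp
    rw [e1, e2, add_comm]

/-- Differentiability of iterated derivatives survives multiplication by a polynomial. -/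
lemma P_mul_aux (A B : ℝ) (m : ℕ) (g : ℝ → ℝ)
    (hg : ∀ i < m, ∀ y ∈ Set.Ioo A B, DifferentiableAt ℝ (iteratedDeriv i g) y)
    (p : Polynomial ℝ) :
    ∀ i < m, ∀ y ∈ Set.Ioo A B,
      DifferentiableAt ℝ (iteratedDeriv i (fun x => g x * p.eval x)) y := by
  intro i him y hy
  obtain ⟨c, _, hc⟩ := mul_poly_aux A B m g hg p i (le_of_lt him)
  have hEv : iteratedDeriv i (fun x => g x * p.eval x) =ᶠ[nhds y]
      (fun x => ∑ i' ∈ Finset.range (i + 1), iteratedDeriv i' g x * (c i').eval x) :=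
    Filter.eventuallyEq_of_mem (isOpen_Ioo.mem_nhds hy) hc
  rw [hEv.differentiableAt_iff]
  apply DifferentiableAt.fun_sum
  intro i' hi'
  exact ((hg i' (by simp at hi'; omega) y hy).mul
    (Polynomial.differentiableAt (p := c i')))

/-- Iterated derivative of `g - p.eval` on an open interval. -/
lemma sub_poly_aux (A B : ℝ) (m : ℕ) (g : ℝ → ℝ)
    (hg : ∀ i < m, ∀ y ∈ Set.Ioo A B, DifferentiableAt ℝ (iteratedDeriv i g) y)
    (p : Polynomial ℝ) :
    ∀ j ≤ m, ∀ x ∈ Set.Ioo A B,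
      iteratedDeriv j (fun y => g y - p.eval y) x =
        iteratedDeriv j g x - (Polynomial.derivative^[j] p).eval x := by
  intro j
  induction j with
  | zero => intro _ x _; simp [iteratedDeriv_zero]
  | succ j ih =>
    intro hjm x hx
    have hEv : iteratedDeriv j (fun y => g y - p.eval y) =ᶠ[nhds x]
        (fun y => iteratedDeriv j g y - (Polynomial.derivative^[j] p).eval y) :=
      Filter.eventuallyEq_of_mem (isOpen_Ioo.mem_nhds hx) (ih (by omega))
    have hder : HasDerivAt (fun y => iteratedDeriv j g y - (Polynomial.derivative^[j] p).eval y)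
        (iteratedDeriv (j + 1) g x - ((Polynomial.derivative^[j] p).derivative).eval x) x := by
      have h1 : HasDerivAt (iteratedDeriv j g) (iteratedDeriv (j + 1) g x) x := by
        rw [iteratedDeriv_succ]
        exact (hg j (by omega) x hx).hasDerivAt
      exact h1.sub (Polynomial.hasDerivAt _ x)
    rw [iteratedDeriv_succ, hEv.deriv_eq, hder.deriv, Function.iterate_succ_apply']

lemma P_sub_aux (A B : ℝ) (m : ℕ) (g : ℝ → ℝ)
    (hg : ∀ i < m, ∀ y ∈ Set.Ioo A B, DifferentiableAt ℝ (iteratedDeriv i g) y)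
    (p : Polynomial ℝ) :
    ∀ i < m, ∀ y ∈ Set.Ioo A B,
      DifferentiableAt ℝ (iteratedDeriv i (fun x => g x - p.eval x)) y := by
  intro i him y hy
  have hEv : iteratedDeriv i (fun x => g x - p.eval x) =ᶠ[nhds y]
      (fun x => iteratedDeriv i g x - (Polynomial.derivative^[i] p).eval x) :=
    Filter.eventuallyEq_of_mem (isOpen_Ioo.mem_nhds hy)
      (sub_poly_aux A B m g hg p i (le_of_lt him))
  rw [hEv.differentiableAt_iff]
  exact (hg i him y hy).sub (Polynomial.differentiableAt _)

lemma iterate_derivative_add_aux (j : ℕ) (p q : Polynomial ℝ) :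
    Polynomial.derivative^[j] (p + q) =
      Polynomial.derivative^[j] p + Polynomial.derivative^[j] q := by
  induction j with
  | zero => simp
  | succ j ih => simp [Function.iterate_succ_apply', ih]
/-- Error formula for Padé-type rational and barycentric interpolants:
if `H = G·D - N·Q` vanishes to order `n` at `0` and at the `k` distinct nonzero nodes
`τ_i ∈ [a, b]`, and `G` is `n + k` times differentiable, then for each
`t ∈ [a, b] \ {0, τ_1, …, τ_k}` there is `ξ = ξ_t ∈ [a, b]` with
`G(t)D(t) - N(t)Q(t) = (t^n ∏ (t - τ_i)/(n+k)!) · (G·D)^{(n+k)}(ξ)`; in particular,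
writing `G = f·Q`, the interpolation error satisfies
`f(t) - N(t)/D(t) = (t^n ∏ (t - τ_i)/((n+k)! D(t) Q(t))) · (f·D·Q)^{(n+k)}(ξ)`
whenever `D(t)Q(t) ≠ 0`. -/
theorem pade_type_interpolation_error_formula
    (n k : ℕ) (hn : 1 ≤ n) (hk : 1 ≤ k)
    (a b : ℝ) (hab : a < b) (h0ab : (0 : ℝ) ∈ Set.Icc a b)
    (τ : Fin k → ℝ) (hinj : Function.Injective τ) (hτ0 : ∀ i, τ i ≠ 0)
    (hτab : ∀ i, τ i ∈ Set.Icc a b)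
    (t : ℝ) (ht : t ∈ Set.Icc a b) (ht0 : t ≠ 0) (htτ : ∀ i, t ≠ τ i)
    (D N Q : Polynomial ℝ)
    (hdeg : N.natDegree + Q.natDegree ≤ n + k - 1)
    (A B : ℝ) (hAB : Set.Icc a b ⊆ Set.Ioo A B)
    (G : ℝ → ℝ)
    (hG : ∀ i < n + k, ∀ y ∈ Set.Ioo A B, DifferentiableAt ℝ (iteratedDeriv i G) y)
    (H : ℝ → ℝ) (hH : ∀ x, H x = G x * D.eval x - N.eval x * Q.eval x)
    (hH0 : ∀ j < n, iteratedDeriv j H 0 = 0)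
    (hHτ : ∀ i, H (τ i) = 0) :
    ∃ ξ ∈ Set.Icc a b,
      G t * D.eval t - N.eval t * Q.eval t =
        (t ^ n * ∏ i, (t - τ i)) / ((n + k).factorial : ℝ) *
          iteratedDeriv (n + k) (fun x => G x * D.eval x) ξ ∧
      ∀ f : ℝ → ℝ, (∀ x, G x = f x * Q.eval x) → D.eval t * Q.eval t ≠ 0 →
        f t - N.eval t / D.eval t =
          (t ^ n * ∏ i, (t - τ i)) /
              (((n + k).factorial : ℝ) * D.eval t * Q.eval t) *
            iteratedDeriv (n + k) (fun x => f x * D.eval x * Q.eval x) ξ := by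
  classical
  set ω : Polynomial ℝ := Polynomial.X ^ n * ∏ i : Fin k, (Polynomial.X - Polynomial.C (τ i))
    with hωdef
  have hprodmonic : (∏ i : Fin k, (Polynomial.X - Polynomial.C (τ i))).Monic :=
    Polynomial.monic_prod_of_monic _ _ fun i _ => Polynomial.monic_X_sub_C _
  have hωmonic : ω.Monic := (Polynomial.monic_X_pow n).mul hprodmonic
  have hωdeg : ω.natDegree = n + k := by
    rw [hωdef, (Polynomial.monic_X_pow n).natDegree_mul hprodmonic,
      Polynomial.natDegree_X_pow, Polynomial.natDegree_prod_of_monic _ _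
        (fun i _ => Polynomial.monic_X_sub_C _)]
    simp [Polynomial.natDegree_X_sub_C]
  have hωeval : ∀ x : ℝ, ω.eval x = x ^ n * ∏ i, (x - τ i) := by
    intro x
    simp [hωdef, Polynomial.eval_prod]
  have hωt : ω.eval t ≠ 0 := by
    rw [hωeval]
    exact mul_ne_zero (pow_ne_zero _ ht0)
      (Finset.prod_ne_zero_iff.mpr fun i _ => sub_ne_zero.mpr (htτ i))
  have hωτ : ∀ i, ω.eval (τ i) = 0 := by
    intro i
    rw [hωeval]
    rw [Finset.prod_eq_zero (Finset.mem_univ i) (by ring)]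
    ring
  have hωcoeff : ∀ j < n, ω.coeff j = 0 := by
    intro j hj
    exact Polynomial.X_pow_dvd_iff.mp (dvd_mul_right _ _) j hj
  have hωeval0 : ∀ j < n, (Polynomial.derivative^[j] ω).eval 0 = 0 := by
    intro j hj
    rw [← Polynomial.coeff_zero_eq_eval_zero, Polynomial.coeff_iterate_derivative,
      zero_add, hωcoeff j hj, smul_zero]
  have hωtop : Polynomial.derivative^[n + k] ω = Polynomial.C (((n + k).factorial : ℝ)) := by
    have hd : (Polynomial.derivative^[n + k] ω).natDegree ≤ 0 := by
      have := Polynomial.natDegree_iterate_derivative ω (n + k)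
      omega
    rw [Polynomial.eq_C_of_natDegree_le_zero hd, Polynomial.coeff_iterate_derivative, zero_add]
    have hlead : ω.coeff (n + k) = 1 := by
      have := hωmonic.leadingCoeff
      rwa [Polynomial.leadingCoeff, hωdeg] at this
    rw [hlead, Nat.descFactorial_self]
    simp
  set K : ℝ := (G t * D.eval t - N.eval t * Q.eval t) / ω.eval t with hKdef
  set GD : ℝ → ℝ := fun x => G x * D.eval x with hGDdef
  set R : Polynomial ℝ := N * Q + Polynomial.C K * ω with hRdef
  set W : ℝ → ℝ := fun x => GD x - R.eval x with hWdef
  have hGDdiff : ∀ i < n + k, ∀ y ∈ Set.Ioo A B, DifferentiableAt ℝ (iteratedDeriv i GD) y :=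
    P_mul_aux A B (n + k) G hG D
  have hWdiff : ∀ i < n + k, ∀ y ∈ Set.Ioo A B, DifferentiableAt ℝ (iteratedDeriv i W) y :=
    P_sub_aux A B (n + k) GD hGDdiff R
  have hHfun : H = fun x => GD x - (N * Q).eval x := by
    funext x
    simp [hGDdef, hH x]
  have h0U : (0 : ℝ) ∈ Set.Ioo A B := hAB h0ab
  -- values of R evaluated pointwise
  have hReval : ∀ x : ℝ, R.eval x = (N * Q).eval x + K * ω.eval x := by
    intro x
    simp [hRdef]
  -- derivative order n at 0
  have hW0 : ∀ j < n, iteratedDeriv j W 0 = 0 := by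
    intro j hj
    have hjm : j ≤ n + k := by omega
    have e1 : iteratedDeriv j W 0 =
        iteratedDeriv j GD 0 - (Polynomial.derivative^[j] R).eval 0 :=
      sub_poly_aux A B (n + k) GD hGDdiff R j hjm 0 h0U
    have e2 : iteratedDeriv j H 0 =
        iteratedDeriv j GD 0 - (Polynomial.derivative^[j] (N * Q)).eval 0 := by
      rw [hHfun]
      exact sub_poly_aux A B (n + k) GD hGDdiff (N * Q) j hjm 0 h0U
    have e3 : (Polynomial.derivative^[j] R).eval 0 =
        (Polynomial.derivative^[j] (N * Q)).eval 0 + K * (Polynomial.derivative^[j] ω).eval 0 := by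
      rw [hRdef, iterate_derivative_add_aux, Polynomial.eval_add,
        Polynomial.iterate_derivative_C_mul, Polynomial.eval_mul, Polynomial.eval_C]
    have := hH0 j hj
    rw [e2] at this
    rw [e1, e3, hωeval0 j hj]
    linarith
  -- zero set
  set S : Finset ℝ := insert t (Finset.image τ Finset.univ) with hSdef
  have htnotin : t ∉ Finset.image τ Finset.univ := by
    simp only [Finset.mem_image]
    rintro ⟨i, _, hi⟩
    exact htτ i hi.symm
  have hScard : S.card = k + 1 := by
    rw [hSdef, Finset.card_insert_of_notMem htnotin,
      Finset.card_image_of_injective _ hinj, Finset.card_univ, Fintype.card_fin]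
  have hS0 : (0 : ℝ) ∉ S := by
    simp only [hSdef, Finset.mem_insert, Finset.mem_image]
    rintro (h | ⟨i, _, hi⟩)
    · exact ht0 h.symm
    · exact hτ0 i hi
  have hSmem : ∀ x ∈ S, x ∈ Set.Icc a b := by
    intro x hx
    rcases Finset.mem_insert.mp hx with h | h
    · rwa [h]
    · obtain ⟨i, _, rfl⟩ := Finset.mem_image.mp h
      exact hτab i
  have hWx : ∀ x, W x = H x - K * ω.eval x := by
    intro x
    rw [hWdef]
    simp only [hGDdef, hReval x, Polynomial.eval_mul, hH x]
    ring
  have hSzero : ∀ x ∈ S, W x = 0 := by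
    intro x hx
    rcases Finset.mem_insert.mp hx with h | h
    · rw [h, hWx, hKdef, hH t]
      field_simp
      ring
    · obtain ⟨i, _, rfl⟩ := Finset.mem_image.mp h
      rw [hWx, hHτ i, hωτ i]
      ring
  obtain ⟨ξ, hξ, hξ0⟩ := rolleB_aux n k A B a b W hAB h0ab hWdiff hW0 S hScard hS0 hSmem hSzero
  -- compute the (n+k)-th derivative relation
  have hξU : ξ ∈ Set.Ioo A B := hAB hξ
  have hNQzero : Polynomial.derivative^[n + k] (N * Q) = 0 := by
    apply Polynomial.iterate_derivative_eq_zero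
    calc (N * Q).natDegree ≤ N.natDegree + Q.natDegree := Polynomial.natDegree_mul_le
    _ < n + k := by omega
  have hRtop : (Polynomial.derivative^[n + k] R).eval ξ = K * ((n + k).factorial : ℝ) := by
    rw [hRdef, iterate_derivative_add_aux, hNQzero, Polynomial.iterate_derivative_C_mul, hωtop]
    simp
  have hWtop : iteratedDeriv (n + k) W ξ =
      iteratedDeriv (n + k) GD ξ - (Polynomial.derivative^[n + k] R).eval ξ :=
    sub_poly_aux A B (n + k) GD hGDdiff R (n + k) le_rfl ξ hξU
  have hGDtop : iteratedDeriv (n + k) GD ξ = K * ((n + k).factorial : ℝ) := by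
    rw [hWtop, hRtop] at hξ0
    linarith
  have hfact : ((n + k).factorial : ℝ) ≠ 0 := Nat.cast_ne_zero.mpr (Nat.factorial_ne_zero _)
  have hmain : G t * D.eval t - N.eval t * Q.eval t =
      (t ^ n * ∏ i, (t - τ i)) / ((n + k).factorial : ℝ) * iteratedDeriv (n + k) GD ξ := by
    rw [hGDtop, ← hωeval]
    rw [hKdef]
    field_simp
  refine ⟨ξ, hξ, hmain, ?_⟩
  intro f hf hDQ
  have hDt : D.eval t ≠ 0 := left_ne_zero_of_mul hDQ
  have hQt : Q.eval t ≠ 0 := right_ne_zero_of_mul hDQ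
  have hfun : (fun x => f x * D.eval x * Q.eval x) = GD := by
    funext x
    show f x * Polynomial.eval x D * Polynomial.eval x Q = G x * Polynomial.eval x D
    rw [hf x]
    ring
  rw [hfun, hGDtop]
  have hft : G t = f t * Q.eval t := hf t
  rw [hft] at hmain
  rw [hGDtop] at hmain
  have h2 : (t ^ n * ∏ i, (t - τ i)) * K = f t * Q.eval t * D.eval t - N.eval t * Q.eval t := by
    rw [hmain]; field_simp
  have h3 : N.eval t / D.eval t * D.eval t = N.eval t := div_mul_cancel₀ _ hDt
  have h4 : (t ^ n * ∏ i, (t - τ i)) / (((n + k).factorial : ℝ) * D.eval t * Q.eval t) *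
      (K * ((n + k).factorial : ℝ)) * (D.eval t * Q.eval t) = (t ^ n * ∏ i, (t - τ i)) * K := by
    field_simp
  apply mul_right_cancel₀ hDQ
  linear_combination (-Q.eval t) * h3 - h4 - h2
end

section
/- Let P, Q ∈ ℂ[t] with deg P ≤ k, deg Q ≤ k and Q(0) = 1, let (c_i) be the coefficients of the formal power series P · Q⁻¹ (Q is invertible as a power series since its constant term is 1), with partial sums S_n(t) = Σ_{j=0}^n c_j t^j, and let τ_1, …, τ_k be distinct nonzero complex numbers with Q(τ_m) ≠ 0 for all m; set f_m = P(τ_m)/Q(τ_m). Writing b_0, …, b_k for the coefficients of Q (so b_0 = 1), the following hold: (1) for every m = 1, …, k, Σ_{i=0}^k b_i τ_m^i (S_{k−i}(τ_m) − f_m) = 0, i.e., the coefficients of Q solve the interpolation system defining the Padé-type rational interpolant; (2) the numerator relations a_n = Σ_{j=0}^{n} c_{n−j} b_j for n = 0, …, k produce exactly the coefficients of P. Consequently, if in addition the interpolation system normalized by b_0 = 1 has a unique solution, then the Padé-type rational interpolant R_k constructed from the data (c_i) and the k interpolation conditions R_k(τ_m) = f_m is identical to the rational function f = P/Q. -/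
open Finset

/-- The linear interpolation system defining the denominator coefficients of the
Padé-type rational interpolant: `∑_{i=0}^k β_i τ_m^i (S_{k-i}(τ_m) - f_m) = 0`
for every node `τ_m`. -/
def PadeInterpSystem (k : ℕ) (τ fv : Fin k → ℂ) (S : ℕ → ℂ → ℂ) (β : ℕ → ℂ) : Prop :=
  ∀ m : Fin k, ∑ i ∈ range (k + 1), β i * τ m ^ i * (S (k - i) (τ m) - fv m) = 0

/-- **consistency property.** If `f = P/Q` is rational with
`deg P, deg Q ≤ k` and `Q(0) = 1`, `c_i` the coefficients of `P·Q⁻¹`, and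
`f_m = P(τ_m)/Q(τ_m)` at distinct nonzero nodes, then (1) the coefficients of `Q`
solve the interpolation system; (2) the numerator relations reproduce the
coefficients of `P`; hence, if the system normalized by `b_0 = 1` has a unique
solution, the Padé-type rational interpolant is identical to `P/Q`. -/
theorem pade_type_interpolant_consistency
    (k : ℕ) (P Q : Polynomial ℂ)
    (hPdeg : P.natDegree ≤ k) (hQdeg : Q.natDegree ≤ k) (hQ0 : Q.coeff 0 = 1)
    (c : ℕ → ℂ)
    (hc : ∀ i, c i = PowerSeries.coeff (R := ℂ) i ((P : PowerSeries ℂ) * (Q : PowerSeries ℂ)⁻¹))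
    (S : ℕ → ℂ → ℂ) (hS : ∀ n t, S n t = ∑ j ∈ range (n + 1), c j * t ^ j)
    (τ : Fin k → ℂ) (hinj : Function.Injective τ) (hτ0 : ∀ i, τ i ≠ 0)
    (hQτ : ∀ m, Q.eval (τ m) ≠ 0)
    (fv : Fin k → ℂ) (hf : ∀ m, fv m = P.eval (τ m) / Q.eval (τ m))
    (b : ℕ → ℂ) (hb : ∀ i, b i = Q.coeff i) :
    PadeInterpSystem k τ fv S b ∧
    (∀ n ≤ k, ∑ j ∈ range (n + 1), c (n - j) * b j = P.coeff n) ∧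
    (∀ b' : ℕ → ℂ, b' 0 = 1 → PadeInterpSystem k τ fv S b' →
      (∀ b₁ b₂ : ℕ → ℂ, b₁ 0 = 1 → PadeInterpSystem k τ fv S b₁ →
        b₂ 0 = 1 → PadeInterpSystem k τ fv S b₂ → ∀ i ≤ k, b₁ i = b₂ i) →
      (∑ n ∈ range (k + 1),
          Polynomial.C (∑ j ∈ range (n + 1), c (n - j) * b' j) * Polynomial.X ^ n) * Q =
        P * ∑ i ∈ range (k + 1), Polynomial.C (b' i) * Polynomial.X ^ i) := by
  -- The Cauchy-product identity: `∑_{j≤n} c_{n-j} b_j = P.coeff n` for all `n`.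
  have hQunit : (Q : PowerSeries ℂ) * (Q : PowerSeries ℂ)⁻¹ = 1 :=
    PowerSeries.mul_inv_cancel _ (by
      rw [Polynomial.constantCoeff_coe, hQ0]; exact one_ne_zero)
  have hPQ : ((P : PowerSeries ℂ) * (Q : PowerSeries ℂ)⁻¹) * (Q : PowerSeries ℂ)
      = (P : PowerSeries ℂ) := by
    rw [mul_assoc, mul_comm ((Q : PowerSeries ℂ)⁻¹) (Q : PowerSeries ℂ), hQunit, mul_one]
  have hcoeff : ∀ n : ℕ, ∑ j ∈ range (n + 1), c (n - j) * b j = P.coeff n := by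
    intro n
    have h1 : P.coeff n = ∑ j ∈ range (n + 1), c j * b (n - j) := by
      have := congrArg (PowerSeries.coeff (R := ℂ) n) hPQ
      rw [PowerSeries.coeff_mul, Finset.Nat.sum_antidiagonal_eq_sum_range_succ_mk] at this
      rw [← Polynomial.coeff_coe, ← this]
      refine Finset.sum_congr rfl fun j hj => ?_
      rw [hc, hb, Polynomial.coeff_coe]
    rw [h1, ← Finset.sum_range_reflect]
    refine Finset.sum_congr rfl fun j hj => ?_
    rw [Finset.mem_range] at hj
    have h2 : n + 1 - 1 - j = n - j := by omega
    have h3 : n - (n - j) = j := by omega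
    rw [h2, h3]
  -- Part 1: the coefficients of `Q` solve the interpolation system.
  have hb0 : b 0 = 1 := by rw [hb]; exact hQ0
  have hsys : PadeInterpSystem k τ fv S b := by
    intro m
    set t := τ m with ht
    have hsplit : ∑ i ∈ range (k + 1), b i * t ^ i * (S (k - i) t - fv m)
        = (∑ i ∈ range (k + 1), b i * t ^ i * S (k - i) t)
          - (∑ i ∈ range (k + 1), b i * t ^ i) * fv m := by
      rw [Finset.sum_mul, ← Finset.sum_sub_distrib]
      exact Finset.sum_congr rfl fun i _ => by ring
    have hQeval : (∑ i ∈ range (k + 1), b i * t ^ i) = Q.eval t := by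
      rw [Polynomial.eval_eq_sum_range' (Nat.lt_succ_of_le hQdeg)]
      exact Finset.sum_congr rfl fun i _ => by rw [hb]
    have hPeval : (∑ i ∈ range (k + 1), b i * t ^ i * S (k - i) t) = P.eval t := by
      have hA : ∀ i ∈ range (k + 1), b i * t ^ i * S (k - i) t
          = ∑ j ∈ range (k - i + 1), b i * c j * t ^ (i + j) := by
        intro i _
        rw [hS, Finset.mul_sum]
        exact Finset.sum_congr rfl fun j _ => by rw [pow_add]; ring
      rw [Finset.sum_congr rfl hA]
      have hflip := Finset.sum_range_diag_flip (k + 1)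
        (fun i j => b i * c j * t ^ (i + j))
      have hR : ∀ i ∈ range (k + 1),
          (∑ j ∈ range (k + 1 - i), b i * c j * t ^ (i + j))
          = ∑ j ∈ range (k - i + 1), b i * c j * t ^ (i + j) := by
        intro i hi
        rw [Finset.mem_range] at hi
        have : k + 1 - i = k - i + 1 := by omega
        rw [this]
      rw [← Finset.sum_congr rfl hR, ← hflip]
      rw [Polynomial.eval_eq_sum_range' (Nat.lt_succ_of_le hPdeg)]
      refine Finset.sum_congr rfl fun n hn => ?_
      rw [← hcoeff n, Finset.sum_mul]
      refine Finset.sum_congr rfl fun j hj => ?_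
      rw [Finset.mem_range] at hj
      have : j + (n - j) = n := by omega
      rw [this]; ring
    rw [hsplit, hQeval, hPeval, hf, mul_comm, div_mul_cancel₀ _ (hQτ m), sub_self]
  refine ⟨hsys, fun n _ => hcoeff n, ?_⟩
  -- Part 3: uniqueness implies the interpolant equals `P/Q`.
  intro b' hb'0 hb'sys huniq
  have hbb : ∀ i ≤ k, b' i = b i := fun i hi =>
    huniq b' b hb'0 hb'sys hb0 hsys i hi
  have hnum : (∑ n ∈ range (k + 1),
      Polynomial.C (∑ j ∈ range (n + 1), c (n - j) * b' j) * Polynomial.X ^ n) = P := by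
    rw [Polynomial.as_sum_range' P (k + 1) (Nat.lt_succ_of_le hPdeg)]
    refine Finset.sum_congr rfl fun n hn => ?_
    rw [Finset.mem_range] at hn
    rw [Polynomial.C_mul_X_pow_eq_monomial]
    congr 1
    rw [← hcoeff n]
    refine Finset.sum_congr rfl fun j hj => ?_
    rw [Finset.mem_range] at hj
    rw [hbb j (by omega)]
  have hden : (∑ i ∈ range (k + 1),
      Polynomial.C (b' i) * Polynomial.X ^ i) = Q := by
    rw [Polynomial.as_sum_range' Q (k + 1) (Nat.lt_succ_of_le hQdeg)]
    refine Finset.sum_congr rfl fun i hi => ?_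
    rw [Finset.mem_range] at hi
    rw [hbb i (by omega), hb, Polynomial.C_mul_X_pow_eq_monomial]
  rw [hnum, hden]
end
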